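/- Let n ≥ 1, let x₁, …, xₙ be real numbers with |x_i| ≤ B for all i, and set S(m) := Σ_{i=1}^{m} x_i (with S(0) = 0). Let 0 < t ≤ 1 and s ∈ [0, t], and put j := ⌊s·n⌋ and k := ⌊t·n⌋, assuming k ≥ 1. Then | ( S(j) − (j/k)·S(k) )² − ( S(j) − (s/t)·S(k) )² | ≤ 4·k·B² ≤ 4·n·B². -/

import Mathlib

/-- Deterministic approximation bound from the proof of Proposition 2: the squared discrete
centered partial sums differ from their continuous-time analogues by at most `4·k·B² ≤ 4·n·B²`. -/
theorem stmt_8 (n : ℕ) (hn : 1 ≤ n) (x : ℕ → ℝ) (B : ℝ)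
    (hx : ∀ i ∈ Finset.Icc 1 n, |x i| ≤ B)
    (t s : ℝ) (ht0 : 0 < t) (ht1 : t ≤ 1) (hs : s ∈ Set.Icc (0 : ℝ) t)
    (S : ℕ → ℝ) (hS : ∀ m, S m = ∑ i ∈ Finset.Icc 1 m, x i)
    (j k : ℕ) (hj : j = ⌊s * (n : ℝ)⌋₊) (hk : k = ⌊t * (n : ℝ)⌋₊) (hk1 : 1 ≤ k) :
    |(S j - (j : ℝ) / (k : ℝ) * S k) ^ 2 - (S j - s / t * S k) ^ 2| ≤ 4 * (k : ℝ) * B ^ 2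
      ∧ 4 * (k : ℝ) * B ^ 2 ≤ 4 * (n : ℝ) * B ^ 2 := by
  obtain ⟨hs0, hst⟩ := hs
  have hkpos : (0:ℝ) < k := by exact_mod_cast hk1
  have hB : 0 ≤ B := le_trans (abs_nonneg _) (hx 1 (by simp [Finset.mem_Icc, hn]))
  have hnpos : (0:ℝ) < n := by exact_mod_cast hn
  have hkn : (k:ℝ) ≤ n := by
    rw [hk]
    calc ((⌊t*(n:ℝ)⌋₊ : ℕ):ℝ) ≤ t*n := Nat.floor_le (by positivity)
    _ ≤ 1*n := by nlinarith
    _ = n := one_mul _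
  have hjk : j ≤ k := by
    rw [hj, hk]
    exact Nat.floor_le_floor (by nlinarith)
  have hkn' : k ≤ n := by exact_mod_cast hkn
  have Sb : ∀ m, m ≤ n → |S m| ≤ m * B := by
    intro m hm
    rw [hS]
    calc |∑ i ∈ Finset.Icc 1 m, x i| ≤ ∑ i ∈ Finset.Icc 1 m, |x i| :=
          Finset.abs_sum_le_sum_abs _ _
    _ ≤ ∑ i ∈ Finset.Icc 1 m, B := Finset.sum_le_sum (fun i hi => by
          rw [Finset.mem_Icc] at hi
          exact hx i (Finset.mem_Icc.mpr ⟨hi.1, hi.2.trans hm⟩))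
    _ = m * B := by simp [Nat.card_Icc, mul_comm]
  have hSk : |S k| ≤ k * B := Sb k hkn'
  have hSj : |S j| ≤ j * B := Sb j (hjk.trans hkn')
  have hjle : ((j:ℝ)) ≤ k := by exact_mod_cast hjk
  set u : ℝ := (j:ℝ)/k with hu
  set v : ℝ := s/t with hv
  have hu0 : 0 ≤ u := by positivity
  have hu1 : u ≤ 1 := (div_le_one hkpos).mpr hjle
  have hv0 : 0 ≤ v := div_nonneg hs0 ht0.le
  have hv1 : v ≤ 1 := (div_le_one ht0).mpr hst
  -- key fraction bound
  have hj1 : (j:ℝ) ≤ s*n := by rw [hj]; exact Nat.floor_le (by positivity)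
  have hj2 : s*n - 1 < (j:ℝ) := by rw [hj]; exact Nat.sub_one_lt_floor _
  have hk2a : (k:ℝ) ≤ t*n := by rw [hk]; exact Nat.floor_le (by positivity)
  have hk2b : t*n - 1 < (k:ℝ) := by rw [hk]; exact Nat.sub_one_lt_floor _
  have hfrac : |u - v| ≤ 1/k := by
    rw [hu, hv, div_sub_div _ _ (ne_of_gt hkpos) (ne_of_gt ht0), abs_div,
      abs_of_pos (by positivity : (0:ℝ) < (k:ℝ)*t)]
    rw [div_le_div_iff₀ (by positivity) hkpos]
    have habs : |(j:ℝ)*t - (k:ℝ)*s| ≤ t := by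
      rw [abs_le]
      constructor
      · nlinarith
      · nlinarith
    calc |(j:ℝ)*t - (k:ℝ)*s| * k ≤ t * k := by nlinarith [habs]
    _ = 1 * ((k:ℝ)*t) := by ring
  constructor
  · have e : (S j - u*S k)^2 - (S j - v*S k)^2
        = ((v - u)*S k) * ((S j - u*S k) + (S j - v*S k)) := by ring
    rw [e, abs_mul]
    have h1 : |(v - u)*S k| ≤ B := by
      rw [abs_mul, abs_sub_comm]
      calc |u - v| * |S k| ≤ (1/k) * (k*B) :=
            mul_le_mul hfrac hSk (abs_nonneg _) (by positivity)
      _ = B := by field_simp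
    have hAu : |u * S k| ≤ k*B := by
      rw [abs_mul, abs_of_nonneg hu0]
      calc u * |S k| ≤ 1 * ((k:ℝ)*B) := mul_le_mul hu1 hSk (abs_nonneg _) zero_le_one
      _ = (k:ℝ)*B := one_mul _
    have hAv : |v * S k| ≤ k*B := by
      rw [abs_mul, abs_of_nonneg hv0]
      calc v * |S k| ≤ 1 * ((k:ℝ)*B) := mul_le_mul hv1 hSk (abs_nonneg _) zero_le_one
      _ = (k:ℝ)*B := one_mul _
    have hjB : (j:ℝ)*B ≤ (k:ℝ)*B := mul_le_mul_of_nonneg_right hjle hB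
    have h2 : |(S j - u*S k) + (S j - v*S k)| ≤ 4*k*B := by
      have t1 : |S j - u*S k| ≤ 2*k*B := by
        calc |S j - u*S k| ≤ |S j| + |u*S k| := abs_sub _ _
        _ ≤ 2*k*B := by linarith
      have t2 : |S j - v*S k| ≤ 2*k*B := by
        calc |S j - v*S k| ≤ |S j| + |v*S k| := abs_sub _ _
        _ ≤ 2*k*B := by linarith
      calc |(S j - u*S k) + (S j - v*S k)| ≤ |S j - u*S k| + |S j - v*S k| := abs_add_le _ _
      _ ≤ 4*k*B := by linarith
    calc |(v - u)*S k| * |(S j - u*S k) + (S j - v*S k)| ≤ B * (4*k*B) :=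
          mul_le_mul h1 h2 (abs_nonneg _) hB
    _ = 4 * (k:ℝ) * B^2 := by ring
  · nlinarith [sq_nonneg B]
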